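/- Let n ≥ 3, c, d ∈ ℂ^×, and 2 ≤ i ≤ n−1. Then for every x = (x_2,…,x_{2n−1}) ∈ (ℂ^×)^{2n−2} for which all denominators occurring are nonzero, e_0^c(e_i^d(x)) = e_i^d(e_0^c(x)); that is, the rational maps e_0^c and e_i^d commute. -/

import Mathlib

noncomputable section

/-- `Sf n x k = ∑_{j=2}^{k} x_j / x_{n+j-1}` (so `Sf n x 1 = 0`, `S(x) = Sf n x n`). -/
def Sf (n : ℕ) (x : ℕ → ℂ) (k : ℕ) : ℂ :=
  ∑ j ∈ Finset.Icc 2 k, x j / x (n + j - 1)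

/-- `Tf n x k = ∑_{j=k+1}^{n} x_j / x_{n+j-1}` (so `Tf n x n = 0`). -/
def Tf (n : ℕ) (x : ℕ → ℂ) (k : ℕ) : ℂ :=
  ∑ j ∈ Finset.Icc (k + 1) n, x j / x (n + j - 1)

/-- The rational map `e_0^c`. -/
def e0M (n : ℕ) (c : ℂ) (x : ℕ → ℂ) (k : ℕ) : ℂ :=
  if k ≤ n - 1 then x k * Sf n x n / (c * Sf n x k + Tf n x k)
  else if k ≤ n + 1 then x k / c
  else x k * (c * Sf n x (k - n) + Tf n x (k - n)) / (c * Sf n x n)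

/-- The rational map `e_i^c` for `2 ≤ i ≤ n-1`. -/
def eIM (n i : ℕ) (c : ℂ) (x : ℕ → ℂ) (k : ℕ) : ℂ :=
  if k = i then
    (c * (x i * x (n + i) + x (i + 1) * x (n + i - 1)) /
      (c * x i * x (n + i) + x (i + 1) * x (n + i - 1))) * x k
  else if k = n + i then
    (c / (c * (x i * x (n + i) + x (i + 1) * x (n + i - 1)) /
      (c * x i * x (n + i) + x (i + 1) * x (n + i - 1)))) * x k
  else x k

/-- All coordinates in range are nonzero. -/
def Nz (n : ℕ) (z : ℕ → ℂ) : Prop := ∀ k, 2 ≤ k → k ≤ 2 * n - 1 → z k ≠ 0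

/-- Denominators appearing in `e_0^c` at the point `z` are nonzero. -/
def Dom0 (n : ℕ) (c : ℂ) (z : ℕ → ℂ) : Prop :=
  Sf n z n ≠ 0 ∧ ∀ k, 2 ≤ k → k ≤ n - 1 → c * Sf n z k + Tf n z k ≠ 0

/-- Denominator (and the numerator `c_i`) appearing in `e_i^c` at `z` are nonzero. -/
def DomI (n i : ℕ) (c : ℂ) (z : ℕ → ℂ) : Prop :=
  c * z i * z (n + i) + z (i + 1) * z (n + i - 1) ≠ 0 ∧
  z i * z (n + i) + z (i + 1) * z (n + i - 1) ≠ 0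

lemma aux_Sf_succ (n : ℕ) (x : ℕ → ℂ) (k : ℕ) (hk : 1 ≤ k) :
    Sf n x (k+1) = Sf n x k + x (k+1) / x (n+k) := by
  unfold Sf
  rw [Finset.sum_Icc_succ_top (by omega : 2 ≤ k+1)]
  have h : n + (k+1) - 1 = n + k := by omega
  rw [h]

lemma aux_Tf_succ (n : ℕ) (x : ℕ → ℂ) (k : ℕ) (hk : k + 1 ≤ n) :
    Tf n x k = x (k+1) / x (n+k) + Tf n x (k+1) := by
  unfold Tf
  have h : Finset.Icc (k+1) n = insert (k+1) (Finset.Icc (k+2) n) := by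
    ext j; simp only [Finset.mem_Icc, Finset.mem_insert]; omega
  rw [h, Finset.sum_insert (by simp)]
  have h2 : n + (k+1) - 1 = n + k := by omega
  rw [h2]

lemma aux_Sf_one (n : ℕ) (x : ℕ → ℂ) : Sf n x 1 = 0 := by simp [Sf]
lemma aux_Tf_n (n : ℕ) (x : ℕ → ℂ) : Tf n x n = 0 := by simp [Tf]
lemma aux_Tf_one (n : ℕ) (x : ℕ → ℂ) : Tf n x 1 = Sf n x n := rfl

lemma eIM_ne (n i : ℕ) (d : ℂ) (x : ℕ → ℂ) (k : ℕ) (h1 : k ≠ i) (h2 : k ≠ n + i) :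
    eIM n i d x k = x k := by simp [eIM, h1, h2]

lemma eIM_i (n i : ℕ) (d : ℂ) (x : ℕ → ℂ) :
    eIM n i d x i = (d * (x i * x (n + i) + x (i + 1) * x (n + i - 1)) /
      (d * x i * x (n + i) + x (i + 1) * x (n + i - 1))) * x i := by simp [eIM]

lemma eIM_ni (n i : ℕ) (d : ℂ) (x : ℕ → ℂ) (h : 1 ≤ n) :
    eIM n i d x (n + i) = (d / (d * (x i * x (n + i) + x (i + 1) * x (n + i - 1)) /
      (d * x i * x (n + i) + x (i + 1) * x (n + i - 1)))) * x (n + i) := by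
  have h2 : n + i ≠ i := by omega
  unfold eIM; rw [if_neg h2, if_pos rfl]

lemma eIM_ratio (n i : ℕ) (d : ℂ) (x : ℕ → ℂ) (hi : 2 ≤ i) (hi' : i ≤ n - 1)
    (j : ℕ) (hj : 2 ≤ j) (hj' : j ≤ n) (hji : j ≠ i) (hji' : j ≠ i + 1) :
    eIM n i d x j / eIM n i d x (n + j - 1) = x j / x (n + j - 1) := by
  rw [eIM_ne n i d x j hji (by omega), eIM_ne n i d x (n + j - 1) (by omega) (by omega)]

lemma eIM_pair (n i : ℕ) (d : ℂ) (x : ℕ → ℂ) (hn : 3 ≤ n) (hi : 2 ≤ i) (hi' : i ≤ n - 1)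
    (hd : d ≠ 0)
    (hq : x (n + i) ≠ 0) (hs : x (n + i - 1) ≠ 0)
    (hP : x i * x (n + i) + x (i + 1) * x (n + i - 1) ≠ 0)
    (hQ : d * x i * x (n + i) + x (i + 1) * x (n + i - 1) ≠ 0) :
    eIM n i d x i / eIM n i d x (n + i - 1) + eIM n i d x (i + 1) / eIM n i d x (n + i)
      = x i / x (n + i - 1) + x (i + 1) / x (n + i) := by
  rw [eIM_i, eIM_ni n i d x (by omega), eIM_ne n i d x (n + i - 1) (by omega) (by omega),
    eIM_ne n i d x (i + 1) (by omega) (by omega)]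
  field_simp

lemma aux_Sf_eIM (n i : ℕ) (d : ℂ) (x : ℕ → ℂ) (hn : 3 ≤ n) (hi : 2 ≤ i) (hi' : i ≤ n - 1)
    (hd : d ≠ 0) (hq : x (n + i) ≠ 0) (hs : x (n + i - 1) ≠ 0)
    (hP : x i * x (n + i) + x (i + 1) * x (n + i - 1) ≠ 0)
    (hQ : d * x i * x (n + i) + x (i + 1) * x (n + i - 1) ≠ 0)
    (k : ℕ) (hk : k ≤ n) (hki : k ≠ i) :
    Sf n (eIM n i d x) k = Sf n x k := by
  unfold Sf
  rcases lt_or_gt_of_ne hki with h | h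
  · apply Finset.sum_congr rfl
    intro j hj
    simp only [Finset.mem_Icc] at hj
    exact eIM_ratio n i d x hi hi' j hj.1 (by omega) (by omega) (by omega)
  · have h1 : i ∈ Finset.Icc 2 k := by simp only [Finset.mem_Icc]; omega
    have h2 : i + 1 ∈ (Finset.Icc 2 k).erase i := by
      simp only [Finset.mem_erase, Finset.mem_Icc]; omega
    have e1 : ∑ j ∈ Finset.Icc 2 k, eIM n i d x j / eIM n i d x (n + j - 1)
        = eIM n i d x i / eIM n i d x (n + i - 1)
          + ∑ j ∈ (Finset.Icc 2 k).erase i, eIM n i d x j / eIM n i d x (n + j - 1) :=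
      (Finset.add_sum_erase _ _ h1).symm
    have e2 : ∑ j ∈ (Finset.Icc 2 k).erase i, eIM n i d x j / eIM n i d x (n + j - 1)
        = eIM n i d x (i + 1) / eIM n i d x (n + (i + 1) - 1)
          + ∑ j ∈ ((Finset.Icc 2 k).erase i).erase (i + 1),
              eIM n i d x j / eIM n i d x (n + j - 1) :=
      (Finset.add_sum_erase _ _ h2).symm
    have e3 : ∑ j ∈ Finset.Icc 2 k, x j / x (n + j - 1)
        = x i / x (n + i - 1) + ∑ j ∈ (Finset.Icc 2 k).erase i, x j / x (n + j - 1) :=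
      (Finset.add_sum_erase _ _ h1).symm
    have e4 : ∑ j ∈ (Finset.Icc 2 k).erase i, x j / x (n + j - 1)
        = x (i + 1) / x (n + (i + 1) - 1)
          + ∑ j ∈ ((Finset.Icc 2 k).erase i).erase (i + 1), x j / x (n + j - 1) :=
      (Finset.add_sum_erase _ _ h2).symm
    have hsum : ∑ j ∈ ((Finset.Icc 2 k).erase i).erase (i + 1),
          eIM n i d x j / eIM n i d x (n + j - 1)
        = ∑ j ∈ ((Finset.Icc 2 k).erase i).erase (i + 1), x j / x (n + j - 1) := by
      apply Finset.sum_congr rfl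
      intro j hj
      simp only [Finset.mem_erase, Finset.mem_Icc] at hj
      exact eIM_ratio n i d x hi hi' j (by omega) (by omega) (by omega) (by omega)
    have hidx : n + (i + 1) - 1 = n + i := by omega
    rw [e1, e2, e3, e4, hsum, hidx]
    linear_combination eIM_pair n i d x hn hi hi' hd hq hs hP hQ

lemma aux_Tf_eIM (n i : ℕ) (d : ℂ) (x : ℕ → ℂ) (hn : 3 ≤ n) (hi : 2 ≤ i) (hi' : i ≤ n - 1)
    (hd : d ≠ 0) (hq : x (n + i) ≠ 0) (hs : x (n + i - 1) ≠ 0)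
    (hP : x i * x (n + i) + x (i + 1) * x (n + i - 1) ≠ 0)
    (hQ : d * x i * x (n + i) + x (i + 1) * x (n + i - 1) ≠ 0)
    (k : ℕ) (hk1 : 1 ≤ k) (hki : k ≠ i) :
    Tf n (eIM n i d x) k = Tf n x k := by
  unfold Tf
  rcases lt_or_gt_of_ne hki with h | h
  · have h1 : i ∈ Finset.Icc (k + 1) n := by simp only [Finset.mem_Icc]; omega
    have h2 : i + 1 ∈ (Finset.Icc (k + 1) n).erase i := by
      simp only [Finset.mem_erase, Finset.mem_Icc]; omega
    have e1 : ∑ j ∈ Finset.Icc (k + 1) n, eIM n i d x j / eIM n i d x (n + j - 1)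
        = eIM n i d x i / eIM n i d x (n + i - 1)
          + ∑ j ∈ (Finset.Icc (k + 1) n).erase i, eIM n i d x j / eIM n i d x (n + j - 1) :=
      (Finset.add_sum_erase _ _ h1).symm
    have e2 : ∑ j ∈ (Finset.Icc (k + 1) n).erase i, eIM n i d x j / eIM n i d x (n + j - 1)
        = eIM n i d x (i + 1) / eIM n i d x (n + (i + 1) - 1)
          + ∑ j ∈ ((Finset.Icc (k + 1) n).erase i).erase (i + 1),
              eIM n i d x j / eIM n i d x (n + j - 1) :=
      (Finset.add_sum_erase _ _ h2).symm
    have e3 : ∑ j ∈ Finset.Icc (k + 1) n, x j / x (n + j - 1)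
        = x i / x (n + i - 1) + ∑ j ∈ (Finset.Icc (k + 1) n).erase i, x j / x (n + j - 1) :=
      (Finset.add_sum_erase _ _ h1).symm
    have e4 : ∑ j ∈ (Finset.Icc (k + 1) n).erase i, x j / x (n + j - 1)
        = x (i + 1) / x (n + (i + 1) - 1)
          + ∑ j ∈ ((Finset.Icc (k + 1) n).erase i).erase (i + 1), x j / x (n + j - 1) :=
      (Finset.add_sum_erase _ _ h2).symm
    have hsum : ∑ j ∈ ((Finset.Icc (k + 1) n).erase i).erase (i + 1),
          eIM n i d x j / eIM n i d x (n + j - 1)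
        = ∑ j ∈ ((Finset.Icc (k + 1) n).erase i).erase (i + 1), x j / x (n + j - 1) := by
      apply Finset.sum_congr rfl
      intro j hj
      simp only [Finset.mem_erase, Finset.mem_Icc] at hj
      exact eIM_ratio n i d x hi hi' j (by omega) (by omega) (by omega) (by omega)
    have hidx : n + (i + 1) - 1 = n + i := by omega
    rw [e1, e2, e3, e4, hsum, hidx]
    linear_combination eIM_pair n i d x hn hi hi' hd hq hs hP hQ
  · apply Finset.sum_congr rfl
    intro j hj
    simp only [Finset.mem_Icc] at hj
    exact eIM_ratio n i d x hi hi' j (by omega) (by omega) (by omega) (by omega)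

lemma aux_key_B (n i : ℕ) (d : ℂ) (x : ℕ → ℂ) (hn : 3 ≤ n) (hi : 2 ≤ i) (hi' : i ≤ n - 1)
    (hd : d ≠ 0) (hq : x (n + i) ≠ 0) (hs : x (n + i - 1) ≠ 0)
    (hP : x i * x (n + i) + x (i + 1) * x (n + i - 1) ≠ 0)
    (hQ : d * x i * x (n + i) + x (i + 1) * x (n + i - 1) ≠ 0) (c : ℂ) :
    c * Sf n (eIM n i d x) i + Tf n (eIM n i d x) i
      = (c * Sf n x i + Tf n x i)
        + (d - 1) * (c - 1) * (x i * x (i + 1))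
            / (d * x i * x (n + i) + x (i + 1) * x (n + i - 1)) := by
  obtain ⟨m, rfl⟩ : ∃ m, i = m + 1 := ⟨i - 1, by omega⟩
  have hm1 : 1 ≤ m := by omega
  have hm2 : m + 2 ≤ n := by omega
  rw [aux_Sf_succ n (eIM n (m+1) d x) m hm1, aux_Sf_succ n x m hm1,
      aux_Tf_succ n (eIM n (m+1) d x) (m+1) hm2, aux_Tf_succ n x (m+1) hm2,
      aux_Sf_eIM n (m+1) d x hn hi hi' hd hq hs hP hQ m (by omega) (by omega),
      aux_Tf_eIM n (m+1) d x hn hi hi' hd hq hs hP hQ (m+2) (by omega) (by omega),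
      eIM_i n (m+1) d x,
      eIM_ne n (m+1) d x (n+m) (by omega) (by omega),
      eIM_ne n (m+1) d x (m+2) (by omega) (by omega)]
  have h1 : eIM n (m+1) d x (n + (m+1))
      = (d / (d * (x (m+1) * x (n + (m+1)) + x ((m+1) + 1) * x (n + (m+1) - 1)) /
          (d * x (m+1) * x (n + (m+1)) + x ((m+1) + 1) * x (n + (m+1) - 1)))) * x (n + (m+1)) :=
    eIM_ni n (m+1) d x (by omega)
  have hidx1 : n + (m + 1) - 1 = n + m := by omega
  have hidx2 : m + 1 + 1 = m + 2 := by omega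
  simp only [hidx1, hidx2] at h1 hP hQ hs ⊢
  rw [h1]
  have hdi : d * (x (m+1) * x (n + (m+1)) + x (m+2) * x (n + m)) /
      (d * x (m+1) * x (n + (m+1)) + x (m+2) * x (n + m)) ≠ 0 :=
    div_ne_zero (mul_ne_zero hd hP) hQ
  field_simp
  ring

lemma aux_z1 (n : ℕ) (c : ℂ) (x : ℕ → ℂ) (hn : 3 ≤ n) (hc : c ≠ 0) (hS : Sf n x n ≠ 0)
    (k : ℕ) (hk2 : 2 ≤ k) (hk : k ≤ n) :
    e0M n c x k = x k * Sf n x n / (c * Sf n x k + Tf n x k) := by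
  unfold e0M
  by_cases h : k ≤ n - 1
  · rw [if_pos h]
  · have hk' : k = n := by omega
    subst hk'
    rw [if_neg h, if_pos (by omega), aux_Tf_n, add_zero]
    field_simp

lemma aux_z2 (n : ℕ) (c : ℂ) (x : ℕ → ℂ) (hn : 3 ≤ n) (hc : c ≠ 0) (hS : Sf n x n ≠ 0)
    (l : ℕ) (hl1 : 1 ≤ l) (hl : l ≤ n - 1) :
    e0M n c x (n + l) = x (n + l) * (c * Sf n x l + Tf n x l) / (c * Sf n x n) := by
  unfold e0M
  by_cases h : l = 1
  · subst h
    rw [if_neg (by omega), if_pos (by omega), aux_Sf_one, aux_Tf_one]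
    field_simp
    ring
  · rw [if_neg (by omega), if_neg (by omega), show n + l - n = l from by omega]

lemma aux_A_ne (n : ℕ) (c : ℂ) (x : ℕ → ℂ) (hn : 3 ≤ n) (hc : c ≠ 0)
    (hS : Sf n x n ≠ 0) (hmid : ∀ k, 2 ≤ k → k ≤ n - 1 → c * Sf n x k + Tf n x k ≠ 0)
    (k : ℕ) (hk1 : 1 ≤ k) (hk : k ≤ n) : c * Sf n x k + Tf n x k ≠ 0 := by
  by_cases h1 : k = 1
  · subst h1; rw [aux_Sf_one, aux_Tf_one, mul_zero, zero_add]; exact hS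
  by_cases h2 : k = n
  · subst h2; rw [aux_Tf_n, add_zero]; exact mul_ne_zero hc hS
  · exact hmid k (by omega) (by omega)

lemma aux_Rel_up (n : ℕ) (x : ℕ → ℂ) (c : ℂ) (k : ℕ) (hk : 1 ≤ k) (hk' : k + 1 ≤ n) :
    c * Sf n x (k+1) + Tf n x (k+1)
      = (c * Sf n x k + Tf n x k) + (c - 1) * (x (k+1) / x (n+k)) := by
  rw [aux_Sf_succ n x k hk, aux_Tf_succ n x k hk']
  ring

set_option maxHeartbeats 1000000 in
/-- the rational maps `e_0^c` and `e_i^d` commute for `2 ≤ i ≤ n-1`. -/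
theorem stmt9 (n : ℕ) (hn : 3 ≤ n) (c d : ℂ) (hc : c ≠ 0) (hd : d ≠ 0)
    (i : ℕ) (hi : 2 ≤ i) (hi' : i ≤ n - 1) (x : ℕ → ℂ)
    (hx : Nz n x)
    (h1 : DomI n i d x) (h2 : Nz n (eIM n i d x)) (h3 : Dom0 n c (eIM n i d x))
    (h4 : Dom0 n c x) (h5 : Nz n (e0M n c x)) (h6 : DomI n i d (e0M n c x)) :
    ∀ k, 2 ≤ k → k ≤ 2 * n - 1 →
      e0M n c (eIM n i d x) k = eIM n i d (e0M n c x) k := by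
  intro k hk2 hk2n
  have hp : x i ≠ 0 := hx i hi (by omega)
  have hq : x (n+i) ≠ 0 := hx (n+i) (by omega) (by omega)
  have hr : x (i+1) ≠ 0 := hx (i+1) (by omega) (by omega)
  have hs : x (n+i-1) ≠ 0 := hx (n+i-1) (by omega) (by omega)
  obtain ⟨hQ, hP⟩ := h1
  have hS : Sf n x n ≠ 0 := h4.1
  have hSy : Sf n (eIM n i d x) n = Sf n x n :=
    aux_Sf_eIM n i d x hn hi hi' hd hq hs hP hQ n le_rfl (by omega)
  have hA : ∀ m, 1 ≤ m → m ≤ n → c * Sf n x m + Tf n x m ≠ 0 :=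
    aux_A_ne n c x hn hc h4.1 h4.2
  have hRel1 := aux_Rel_up n x c i (by omega) (by omega)
  have hRel2 : c * Sf n x (i-1) + Tf n x (i-1)
      = (c * Sf n x i + Tf n x i) - (c - 1) * (x i / x (n + i - 1)) := by
    have h := aux_Rel_up n x c (i-1) (by omega) (by omega)
    rw [show i - 1 + 1 = i from by omega, show n + (i-1) = n + i - 1 from by omega] at h
    linear_combination -h
  have hzi : e0M n c x i = x i * Sf n x n / (c * Sf n x i + Tf n x i) :=
    aux_z1 n c x hn hc hS i hi (by omega)
  have hzi1 : e0M n c x (i+1)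
      = x (i+1) * Sf n x n / ((c * Sf n x i + Tf n x i) + (c - 1) * (x (i+1) / x (n+i))) := by
    rw [aux_z1 n c x hn hc hS (i+1) (by omega) (by omega), hRel1]
  have hzni : e0M n c x (n+i) = x (n+i) * (c * Sf n x i + Tf n x i) / (c * Sf n x n) :=
    aux_z2 n c x hn hc hS i (by omega) hi'
  have hznim : e0M n c x (n+i-1)
      = x (n+i-1) * ((c * Sf n x i + Tf n x i) - (c - 1) * (x i / x (n+i-1)))
        / (c * Sf n x n) := by
    have h := aux_z2 n c x hn hc hS (i-1) (by omega) (by omega)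
    rw [show n + (i-1) = n + i - 1 from by omega, hRel2] at h
    exact h
  have hB := aux_key_B n i d x hn hi hi' hd hq hs hP hQ c
  have hAi : c * Sf n x i + Tf n x i ≠ 0 := hA i (by omega) (by omega)
  have hAp : (c * Sf n x i + Tf n x i) + (c - 1) * (x (i+1) / x (n+i)) ≠ 0 := by
    have h := hA (i+1) (by omega) (by omega); rwa [hRel1] at h
  have hAm : (c * Sf n x i + Tf n x i) - (c - 1) * (x i / x (n+i-1)) ≠ 0 := by
    have h := hA (i-1) (by omega) (by omega); rwa [hRel2] at h
  have hBne : (c * Sf n x i + Tf n x i)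
      + (d - 1) * (c - 1) * (x i * x (i+1))
          / (d * x i * x (n+i) + x (i+1) * x (n+i-1)) ≠ 0 := by
    have h := h3.2 i hi hi'; rwa [hB] at h
  -- single-fraction forms of the shifted denominators
  have hApq : (c * Sf n x i + Tf n x i) + (c - 1) * (x (i+1) / x (n+i))
      = ((c * Sf n x i + Tf n x i) * x (n+i) + (c - 1) * x (i+1)) / x (n+i) := by
    field_simp
  have hAms : (c * Sf n x i + Tf n x i) - (c - 1) * (x i / x (n+i-1))
      = ((c * Sf n x i + Tf n x i) * x (n+i-1) - (c - 1) * x i) / x (n+i-1) := by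
    field_simp
    try ring
  have hBQ : (c * Sf n x i + Tf n x i)
      + (d - 1) * (c - 1) * (x i * x (i+1))
          / (d * x i * x (n+i) + x (i+1) * x (n+i-1))
      = ((c * Sf n x i + Tf n x i) * (d * x i * x (n+i) + x (i+1) * x (n+i-1))
          + (d - 1) * (c - 1) * (x i * x (i+1)))
        / (d * x i * x (n+i) + x (i+1) * x (n+i-1)) := by
    field_simp
  have hApqn : (c * Sf n x i + Tf n x i) * x (n+i) + (c - 1) * x (i+1) ≠ 0 := by
    have h := hAp; rw [hApq] at h; exact (div_ne_zero_iff.mp h).1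
  have hAmsn : (c * Sf n x i + Tf n x i) * x (n+i-1) - (c - 1) * x i ≠ 0 := by
    have h := hAm; rw [hAms] at h; exact (div_ne_zero_iff.mp h).1
  have hBQn : (c * Sf n x i + Tf n x i) * (d * x i * x (n+i) + x (i+1) * x (n+i-1))
      + (d - 1) * (c - 1) * (x i * x (i+1)) ≠ 0 := by
    have h := hBne; rw [hBQ] at h; exact (div_ne_zero_iff.mp h).1
  have hApqn' : (c * Sf n x i + Tf n x i) * x (n + i) + x (i + 1) * (c - 1) ≠ 0 := by
    rw [mul_comm (x (i + 1))]; exact hApqn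
  have hAmsn' : (c * Sf n x i + Tf n x i) * x (n + i - 1) - x i * (c - 1) ≠ 0 := by
    rw [mul_comm (x i)]; exact hAmsn
  -- the two key products appearing in `e_i^d` applied to `e_0^c x`
  have e1 : e0M n c x i * e0M n c x (n+i) + e0M n c x (i+1) * e0M n c x (n+i-1)
      = (x i * x (n+i) * ((c * Sf n x i + Tf n x i) * x (n+i) + (c - 1) * x (i+1))
          + x (i+1) * x (n+i) * ((c * Sf n x i + Tf n x i) * x (n+i-1) - (c - 1) * x i))
        / (c * ((c * Sf n x i + Tf n x i) * x (n+i) + (c - 1) * x (i+1))) := by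
    rw [hzi, hzni, hzi1, hznim, hApq, hAms]
    field_simp
  have e2 : d * e0M n c x i * e0M n c x (n+i) + e0M n c x (i+1) * e0M n c x (n+i-1)
      = (d * (x i * x (n+i)) * ((c * Sf n x i + Tf n x i) * x (n+i) + (c - 1) * x (i+1))
          + x (i+1) * x (n+i) * ((c * Sf n x i + Tf n x i) * x (n+i-1) - (c - 1) * x i))
        / (c * ((c * Sf n x i + Tf n x i) * x (n+i) + (c - 1) * x (i+1))) := by
    rw [hzi, hzni, hzi1, hznim, hApq, hAms]
    field_simp
  have hN1 : x i * x (n+i) * ((c * Sf n x i + Tf n x i) * x (n+i) + (c - 1) * x (i+1))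
      + x (i+1) * x (n+i) * ((c * Sf n x i + Tf n x i) * x (n+i-1) - (c - 1) * x i) ≠ 0 := by
    have h := h6.2; rw [e1] at h; exact (div_ne_zero_iff.mp h).1
  have hN2 : d * (x i * x (n+i)) * ((c * Sf n x i + Tf n x i) * x (n+i) + (c - 1) * x (i+1))
      + x (i+1) * x (n+i) * ((c * Sf n x i + Tf n x i) * x (n+i-1) - (c - 1) * x i) ≠ 0 := by
    have h := h6.1; rw [e2] at h; exact (div_ne_zero_iff.mp h).1
  by_cases hki : k = i
  · rw [hki]
    have hLHS : e0M n c (eIM n i d x) i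
        = eIM n i d x i * Sf n (eIM n i d x) n
          / (c * Sf n (eIM n i d x) i + Tf n (eIM n i d x) i) := by
      unfold e0M; rw [if_pos hi']
    rw [hLHS, hSy, hB, hBQ, eIM_i n i d x, eIM_i n i d (e0M n c x), e1, e2, hzi]
    field_simp
    rw [div_eq_div_iff (by intro h; apply hBQn; linear_combination h)
      (mul_ne_zero (by intro h; apply hApqn; linear_combination h)
        (by intro h; apply hN2; linear_combination x (n + i) * h))]
    ring
  by_cases hkni : k = n + i
  · rw [hkni]
    have hLHS : e0M n c (eIM n i d x) (n+i)
        = eIM n i d x (n+i)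
          * (c * Sf n (eIM n i d x) (n+i-n) + Tf n (eIM n i d x) (n+i-n))
          / (c * Sf n (eIM n i d x) n) := by
      unfold e0M; rw [if_neg (by omega), if_neg (by omega)]
    rw [hLHS, show n + i - n = i from by omega, hSy, hB, hBQ, eIM_ni n i d x (by omega),
        eIM_ni n i d (e0M n c x) (by omega), e1, e2, hzni]
    field_simp
    rw [eq_div_iff (mul_ne_zero (by intro h; apply hApqn; linear_combination h)
        (by intro h; apply hN1; linear_combination x (n + i) * h))]
    ring
  · rw [eIM_ne n i d (e0M n c x) k hki hkni]
    by_cases hkle : k ≤ n - 1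
    · have hLHS : e0M n c (eIM n i d x) k
          = eIM n i d x k * Sf n (eIM n i d x) n
            / (c * Sf n (eIM n i d x) k + Tf n (eIM n i d x) k) := by
        unfold e0M; rw [if_pos hkle]
      rw [hLHS, hSy, aux_Sf_eIM n i d x hn hi hi' hd hq hs hP hQ k (by omega) hki,
          aux_Tf_eIM n i d x hn hi hi' hd hq hs hP hQ k (by omega) hki,
          eIM_ne n i d x k hki (by omega),
          aux_z1 n c x hn hc hS k hk2 (by omega)]
    · by_cases hkn1 : k ≤ n + 1
      · have hLHS : e0M n c (eIM n i d x) k = eIM n i d x k / c := by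
          unfold e0M; rw [if_neg hkle, if_pos hkn1]
        have hRHS : e0M n c x k = x k / c := by
          unfold e0M; rw [if_neg hkle, if_pos hkn1]
        rw [hLHS, hRHS, eIM_ne n i d x k hki hkni]
      · have hLHS : e0M n c (eIM n i d x) k
            = eIM n i d x k
              * (c * Sf n (eIM n i d x) (k-n) + Tf n (eIM n i d x) (k-n))
              / (c * Sf n (eIM n i d x) n) := by
          unfold e0M; rw [if_neg hkle, if_neg hkn1]
        rw [hLHS, hSy, aux_Sf_eIM n i d x hn hi hi' hd hq hs hP hQ (k-n) (by omega) (by omega),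
            aux_Tf_eIM n i d x hn hi hi' hd hq hs hP hQ (k-n) (by omega) (by omega),
            eIM_ne n i d x k (by omega) hkni]
        have h := aux_z2 n c x hn hc hS (k-n) (by omega) (by omega)
        rw [show n + (k-n) = k from by omega] at h
        rw [h]
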